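/- For every j ∈ {1,…,n}, the determinant μ_j satisfies the identity μ_j = ∑_{1 ≤ i < ℓ ≤ n} w_i w_ℓ · det[v_i | v_ℓ] · det[(1,1,1) above (v_j | v_i | v_ℓ)], where det[v_i | v_ℓ] denotes the determinant of the 2×2 matrix with columns v_i and v_ℓ, and det[(1,1,1) above (v_j | v_i | v_ℓ)] denotes the determinant of the 3×3 matrix whose first row is (1,1,1) and whose remaining two rows are formed by the columns v_j, v_i, v_ℓ. -/

import Mathlib

open Finset

/-- The determinant `μ_j` from the weighted least squares subdivision rule. -/
noncomputable def mu (n : ℕ) (w x y : Fin n → ℝ) (j : Fin n) : ℝ :=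
  (!![1,   ∑ i, w i * x i,       ∑ i, w i * y i;
      x j, ∑ i, w i * x i ^ 2,   ∑ i, w i * x i * y i;
      y j, ∑ i, w i * x i * y i, ∑ i, w i * y i ^ 2]).det

/-- the geometric expansion
`μ_j = ∑_{i < ℓ} w_i w_ℓ · det[v_i | v_ℓ] · det[(1,1,1); (v_j | v_i | v_ℓ)]`. -/
theorem mu_eq_sum_pairs
    (n : ℕ) (x y w : Fin n → ℝ) (hw : ∀ i, 0 < w i) (j : Fin n) :
    mu n w x y j =
      ∑ i, ∑ l ∈ Finset.Ioi i,
        w i * w l * (!![x i, x l; y i, y l]).det *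
          (!![1, 1, 1; x j, x i, x l; y j, y i, y l]).det := by
  set G : Fin n → Fin n → ℝ := fun i l =>
    w i * w l * (!![x i, x l; y i, y l]).det *
      (!![1, 1, 1; x j, x i, x l; y j, y i, y l]).det with hG
  set h : Fin n → Fin n → ℝ := fun i l =>
    w i * w l * (x i ^ 2 * y l ^ 2 - (x i * y i) * (x l * y l)
      - x j * (x i * y l ^ 2 - y i * (x l * y l))
      + y j * (x i * (x l * y l) - y i * x l ^ 2)) with hh
  have hGh : ∀ i l, G i l = h i l + h l i := by
    intro i l
    simp only [hG, hh, Matrix.det_fin_two, Matrix.det_fin_three, Matrix.cons_val',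
      Matrix.cons_val_zero, Matrix.cons_val_one, Matrix.head_cons, Matrix.empty_val',
      Matrix.cons_val_fin_one, Matrix.cons_val_two, Matrix.tail_cons, Matrix.of_apply,
      Matrix.head_fin_const]
    ring
  have hGdiag : ∀ i, G i i = 0 := by
    intro i; rw [hGh]; simp only [hh]; ring
  have hsym : ∀ i l, G l i = G i l := by
    intro i l; rw [hGh, hGh]; ring
  have key : mu n w x y j = ∑ i, ∑ l, h i l := by
    simp only [mu, Matrix.det_fin_three, Matrix.cons_val', Matrix.cons_val_zero,
      Matrix.cons_val_one, Matrix.head_cons, Matrix.empty_val', Matrix.cons_val_fin_one,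
      Matrix.cons_val_two, Matrix.tail_cons, Matrix.of_apply, Matrix.head_fin_const]
    simp only [Finset.sum_mul, Finset.mul_sum, ← Finset.sum_sub_distrib, ← Finset.sum_add_distrib]
    rw [Finset.sum_comm]
    refine Finset.sum_congr rfl fun i _ => Finset.sum_congr rfl fun l _ => ?_
    simp only [hh]; ring
  have h2 := Finset.sum_sum_Ioi_add_eq_sum_sum_off_diag G
  have compl : ∀ i : Fin n, ∑ l ∈ ({i}ᶜ : Finset (Fin n)), G l i = ∑ l, G l i := by
    intro i
    rw [← Finset.sum_compl_add_sum {i} (fun l => G l i), Finset.sum_singleton,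
      hGdiag, add_zero]
  have total : ∑ i, ∑ l, G l i = 2 * mu n w x y j := by
    have e1 : ∑ i, ∑ l, G l i = ∑ i, ∑ l, (h l i + h i l) := by
      refine Finset.sum_congr rfl fun i _ => Finset.sum_congr rfl fun l _ => ?_
      rw [hGh]
    rw [e1]
    simp only [Finset.sum_add_distrib]
    rw [show (∑ i, ∑ l, h l i : ℝ) = ∑ i, ∑ l, h i l from Finset.sum_comm, key]
    ring
  have final : 2 * (∑ i, ∑ l ∈ Finset.Ioi i, G i l) = ∑ i, ∑ l, G l i := by
    calc 2 * (∑ i, ∑ l ∈ Finset.Ioi i, G i l)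
        = ∑ i, ∑ l ∈ Finset.Ioi i, (G l i + G i l) := by
          rw [Finset.mul_sum]
          refine Finset.sum_congr rfl fun i _ => ?_
          rw [Finset.mul_sum]
          refine Finset.sum_congr rfl fun l _ => ?_
          rw [hsym]; ring
      _ = ∑ i, ∑ l, G l i := by
          rw [h2]
          refine Finset.sum_congr rfl fun i _ => ?_
          rw [← Finset.sum_compl_add_sum {i} (fun l => G l i), Finset.sum_singleton,
            hGdiag, add_zero]
  linarith [final, total]
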